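/- For every n ≥ 2 and every integer k with n ≤ k ≤ n(n+1)/2, there exist matrices A, B ∈ M_n(ℝ) with A ≥ 0, B ≥ 0, AB − BA ≥ 0 (entrywise), such that the unital subalgebra of M_n(ℝ) generated by A and B has ℝ-dimension equal to k. -/

import Mathlib

open Matrix

lemma exists_filter_card_eq {α : Type*} [DecidableEq α] (P : Finset α) (key : α → ℕ)
    (hinj : Set.InjOn key P) (m : ℕ) (hm : m ≤ P.card) :
    ∃ t, (P.filter (fun a => key a < t)).card = m := by
  set g : ℕ → ℕ := fun t => (P.filter (fun a => key a < t)).card with hg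
  have hstep : ∀ t, g (t + 1) ≤ g t + 1 := by
    intro t
    have hsub : P.filter (fun a => key a < t + 1) ⊆
        P.filter (fun a => key a < t) ∪ P.filter (fun a => key a = t) := by
      intro a ha
      simp only [Finset.mem_filter, Finset.mem_union] at *
      rcases ha with ⟨haP, hlt⟩
      rcases Nat.lt_succ_iff_lt_or_eq.mp hlt with h | h
      · exact Or.inl ⟨haP, h⟩
      · exact Or.inr ⟨haP, h⟩
    have h1 : (P.filter (fun a => key a = t)).card ≤ 1 := by
      refine Finset.card_le_one.mpr ?_
      intro a ha b hb
      simp only [Finset.mem_filter] at ha hb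
      exact hinj ha.1 hb.1 (ha.2.trans hb.2.symm)
    calc g (t+1) ≤ (P.filter (fun a => key a < t) ∪ P.filter (fun a => key a = t)).card :=
          Finset.card_le_card hsub
      _ ≤ g t + (P.filter (fun a => key a = t)).card := Finset.card_union_le _ _
      _ ≤ g t + 1 := by omega
  have hbig : ∃ T, g T = P.card := by
    classical
    refine ⟨(P.sup key) + 1, ?_⟩
    have : P.filter (fun a => key a < P.sup key + 1) = P := by
      apply Finset.filter_true_of_mem
      intro a ha
      exact Nat.lt_succ_of_le (Finset.le_sup ha)
    simp only [hg]; rw [this]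
  obtain ⟨T, hT⟩ := hbig
  have key2 : ∀ t m, m ≤ g t → ∃ s, g s = m := by
    intro t
    induction t with
    | zero => intro m hm; simp [hg] at hm; exact ⟨0, by simp [hg, hm]⟩
    | succ t ih =>
      intro m hm
      by_cases h : m ≤ g t
      · exact ih m h
      · exact ⟨t + 1, by have := hstep t; omega⟩
  exact key2 T m (by omega)

lemma aeval_diagonal {n : ℕ} (d : Fin n → ℝ) (p : Polynomial ℝ) :
    Polynomial.aeval (Matrix.diagonal d) p = Matrix.diagonal (fun i => p.eval (d i)) := by
  have h1 : Matrix.diagonal d = Matrix.diagonalAlgHom (n := Fin n) ℝ d := rfl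
  rw [h1, Polynomial.aeval_algHom_apply]
  have h2 : (Polynomial.aeval d p : Fin n → ℝ) = fun i => p.eval (d i) := by
    funext i
    have h3 := Polynomial.aeval_algHom_apply (Pi.evalAlgHom ℝ (fun _ : Fin n => ℝ) i) d p
    simpa using h3.symm
  rw [h2]
  rfl

lemma std_mul_mul_std {n : ℕ} (M : Matrix (Fin n) (Fin n) ℝ) (i j : Fin n) :
    Matrix.single i i (1:ℝ) * M * Matrix.single j j 1 = Matrix.single i j (M i j) := by
  ext a b
  simp only [Matrix.mul_apply, Matrix.single, Matrix.of_apply, ite_and, boole_mul,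
    mul_boole, Finset.sum_ite_eq, Finset.sum_ite_eq', Finset.mem_univ, if_true, one_mul, mul_one,
    ite_mul, zero_mul, mul_zero, mul_ite]
  by_cases ha : i = a <;> by_cases hb : j = b <;> simp [ha, hb]

lemma one_eq_sum_std {n : ℕ} :
    (1 : Matrix (Fin n) (Fin n) ℝ) = ∑ i : Fin n, Matrix.single i i (1:ℝ) := by
  ext a b
  simp [Matrix.sum_apply, Matrix.single, Matrix.one_apply, ite_and, Finset.sum_ite_eq,
    eq_comm]

lemma diagonal_eq_sum_std {n : ℕ} (d : Fin n → ℝ) :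
    Matrix.diagonal d = ∑ i : Fin n, d i • Matrix.single i i (1:ℝ) := by
  ext a b
  by_cases h : a = b <;>
    simp [Matrix.sum_apply, Matrix.single, Matrix.diagonal_apply, ite_and,
      Finset.sum_ite_eq, eq_comm, h]

theorem stmt14 (n k : ℕ) (hn : 2 ≤ n) (hk₁ : n ≤ k) (hk₂ : k ≤ n * (n + 1) / 2) :
    ∃ A B : Matrix (Fin n) (Fin n) ℝ,
      (∀ i j, 0 ≤ A i j) ∧ (∀ i j, 0 ≤ B i j) ∧
      (∀ i j, 0 ≤ (A * B - B * A) i j) ∧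
      Module.finrank ℝ ↥(Algebra.adjoin ℝ {A, B}) = k := by
  classical
  set m := k - n with hm
  -- the finset of strictly upper pairs
  set P : Finset (Fin n × Fin n) := Finset.univ.filter (fun p => p.1 < p.2) with hP
  set key : Fin n × Fin n → ℕ := fun p => (p.2 : ℕ) * n + (p.1 : ℕ) with hkey
  have hkeyinj : Function.Injective key := by
    intro p q h
    simp only [hkey] at h
    have h1 : (p.1 : ℕ) < n := p.1.isLt
    have h2 : (q.1 : ℕ) < n := q.1.isLt
    have e1 : ((p.2 : ℕ) * n + p.1) % n = p.1 := by
      rw [Nat.add_comm, Nat.add_mul_mod_self_right]; exact Nat.mod_eq_of_lt h1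
    have e2 : ((q.2 : ℕ) * n + q.1) % n = q.1 := by
      rw [Nat.add_comm, Nat.add_mul_mod_self_right]; exact Nat.mod_eq_of_lt h2
    have e3 : (p.1 : ℕ) = q.1 := by rw [← e1, ← e2, h]
    have e4 : (p.2 : ℕ) = q.2 := by
      have hn0 : 0 < n := by omega
      have := h
      nlinarith [this, e3]
    ext
    · exact_mod_cast e3
    · exact_mod_cast e4
  -- card of P
  have hcardP : 2 * P.card = n * n - n := by
    have hdisj : Disjoint P (Finset.univ.filter (fun p : Fin n × Fin n => p.2 < p.1)) := by
      rw [Finset.disjoint_left]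
      intro p hp hq
      simp only [hP, Finset.mem_filter] at hp hq
      exact absurd (hp.2.trans hq.2) (lt_irrefl _)
    have hun : P ∪ Finset.univ.filter (fun p : Fin n × Fin n => p.2 < p.1) =
        (Finset.univ : Finset (Fin n)).offDiag := by
      ext p
      simp only [hP, Finset.mem_union, Finset.mem_filter, Finset.mem_univ, true_and,
        Finset.mem_offDiag]
      constructor
      · rintro (h | h)
        · exact ne_of_lt h
        · exact (ne_of_lt h).symm
      · intro h
        exact lt_or_gt_of_ne h
    have hswap : P.card = (Finset.univ.filter (fun p : Fin n × Fin n => p.2 < p.1)).card := by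
      apply Finset.card_bij (fun p _ => Prod.swap p)
      · intro p hp
        simp only [hP, Finset.mem_filter, Finset.mem_univ, true_and] at hp ⊢
        exact hp
      · intro p _ q _ h
        exact Prod.swap_injective h
      · intro q hq
        refine ⟨Prod.swap q, ?_, by simp⟩
        simp only [hP, Finset.mem_filter, Finset.mem_univ, true_and] at hq ⊢
        exact hq
    have := Finset.card_union_of_disjoint hdisj
    rw [hun, Finset.offDiag_card] at this
    simp only [Finset.card_univ, Fintype.card_fin] at this
    omega
  have hmP : m ≤ P.card := by
    have hnn : n ≤ n * n := Nat.le_mul_of_pos_left n (by omega)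
    have hr : n * (n + 1) = n * n + n := by ring
    have h1 : n * (n + 1) = (n * n - n) + 2 * n := by omega
    have h2 : n * (n + 1) = 2 * (P.card + n) := by omega
    have h3 : n * (n + 1) / 2 = P.card + n := by omega
    omega
  obtain ⟨t, ht⟩ := exists_filter_card_eq P key (hkeyinj.injOn) m hmP
  set S : Finset (Fin n × Fin n) := P.filter (fun p => key p < t) with hS
  have hSsub : ∀ p ∈ S, p.1 < p.2 := by
    intro p hp
    simp only [hS, hP, Finset.mem_filter, Finset.mem_univ, true_and] at hp
    exact hp.1
  have htrans : ∀ i j l : Fin n, (i, j) ∈ S → (j, l) ∈ S → (i, l) ∈ S := by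
    intro i j l hij hjl
    have h1 : i < j := hSsub _ hij
    have h2 : j < l := hSsub _ hjl
    simp only [hS, hP, Finset.mem_filter, Finset.mem_univ, true_and, hkey] at hjl ⊢
    refine ⟨h1.trans h2, ?_⟩
    have : (i : ℕ) < (j : ℕ) := h1
    omega
  -- the matrices
  set D : Fin n → ℝ := fun i => (n : ℝ) - (i : ℕ) with hD
  have hDpos : ∀ i, 0 < D i := by
    intro i
    have : (i : ℕ) < n := i.isLt
    simp only [hD, sub_pos]
    exact_mod_cast this
  have hDmono : ∀ i j : Fin n, i < j → D j < D i := by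
    intro i j hij
    have : (i : ℕ) < (j : ℕ) := hij
    simp only [hD, sub_lt_sub_iff_left]
    exact_mod_cast this
  have hDinj : Function.Injective D := by
    intro i j hij
    by_contra hne
    rcases lt_or_gt_of_ne hne with h | h
    · exact absurd hij (ne_of_gt (hDmono i j h))
    · exact absurd hij (ne_of_lt (hDmono j i h))
  set A : Matrix (Fin n) (Fin n) ℝ := Matrix.diagonal D with hA
  set B : Matrix (Fin n) (Fin n) ℝ :=
    Matrix.of (fun i j => if (i, j) ∈ S then (1 : ℝ) else 0) with hB
  refine ⟨A, B, ?_, ?_, ?_, ?_⟩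
  · intro i j
    by_cases h : i = j
    · subst h; simp [hA, Matrix.diagonal_apply_eq]; exact (hDpos i).le
    · simp [hA, Matrix.diagonal_apply_ne _ h]
  · intro i j
    simp only [hB, Matrix.of_apply]
    split <;> norm_num
  · intro i j
    have hAB : (A * B) i j = D i * B i j := by simp [hA, Matrix.diagonal_mul]
    have hBA : (B * A) i j = B i j * D j := by simp [hA, Matrix.mul_diagonal]
    rw [Matrix.sub_apply, hAB, hBA]
    by_cases h : (i, j) ∈ S
    · have hij : i < j := hSsub _ h
      have hBij : B i j = 1 := by simp [hB, h]
      rw [hBij]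
      have := hDmono i j hij
      linarith
    · have hBij : B i j = 0 := by simp [hB, h]
      simp [hBij]
  · -- dimension computation
    set E : Fin n × Fin n → Matrix (Fin n) (Fin n) ℝ :=
      fun p => Matrix.single p.1 p.2 (1:ℝ) with hE
    set Sd : Finset (Fin n × Fin n) := Finset.univ.filter (fun p => p.1 = p.2) with hSd
    set S' : Finset (Fin n × Fin n) := S ∪ Sd with hS'
    have hdisj : Disjoint S Sd := by
      rw [Finset.disjoint_left]
      intro p hp hq
      simp only [hSd, Finset.mem_filter, Finset.mem_univ, true_and] at hq
      exact absurd hq (ne_of_lt (hSsub _ hp))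
    have hSdcard : Sd.card = n := by
      have himg : Sd = Finset.univ.image (fun i : Fin n => (i, i)) := by
        ext p
        simp only [hSd, Finset.mem_filter, Finset.mem_univ, true_and, Finset.mem_image]
        constructor
        · intro h
          exact ⟨p.1, Prod.ext_iff.mpr ⟨rfl, h⟩⟩
        · rintro ⟨a, -, rfl⟩
          rfl
      rw [himg, Finset.card_image_of_injective _ (fun a b h => (Prod.ext_iff.mp h).1),
        Finset.card_univ, Fintype.card_fin]
    have hS'card : S'.card = m + n := by
      rw [hS', Finset.card_union_of_disjoint hdisj, ht, hSdcard]
    have hS'mem : ∀ p ∈ S', p ∈ S ∨ p.1 = p.2 := by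
      intro p hp
      rcases Finset.mem_union.mp hp with h | h
      · exact Or.inl h
      · right
        simpa [hSd] using h
    have hdiagS' : ∀ i : Fin n, (i, i) ∈ S' := by
      intro i
      exact Finset.mem_union_right _ (by simp [hSd])
    have hSS' : S ⊆ S' := Finset.subset_union_left
    set V : Submodule ℝ (Matrix (Fin n) (Fin n) ℝ) := Submodule.span ℝ (E '' ↑S') with hV
    have hmemV : ∀ p ∈ S', E p ∈ V := fun p hp =>
      Submodule.subset_span ⟨p, by simpa using hp, rfl⟩
    have honeV : (1 : Matrix (Fin n) (Fin n) ℝ) ∈ V := by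
      rw [one_eq_sum_std]
      exact Submodule.sum_mem _ (fun i _ => hmemV (i, i) (hdiagS' i))
    have hmulS' : ∀ p ∈ S', ∀ q ∈ S', E p * E q ∈ V := by
      rintro ⟨i, j⟩ hp ⟨a, b⟩ hq
      by_cases hja : j = a
      · subst hja
        have hEE : E (i, j) * E (j, b) = E (i, b) := by
          simp only [hE]
          rw [Matrix.single_mul_single_same, one_mul]
        rw [hEE]
        apply hmemV
        rcases hS'mem _ hp with hp' | hp' <;> rcases hS'mem _ hq with hq' | hq'
        · exact hSS' (htrans i j b hp' hq')
        · have : j = b := hq'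
          subst this
          exact hp
        · have : i = j := hp'
          subst this
          exact hq
        · have h1 : i = j := hp'
          have h2 : j = b := hq'
          subst h1; subst h2
          exact hp
      · have hEE : E (i, j) * E (a, b) = 0 := by
          simp [hE, hja]
        rw [hEE]
        exact V.zero_mem
    have hVmul : ∀ x y : Matrix (Fin n) (Fin n) ℝ, x ∈ V → y ∈ V → x * y ∈ V := by
      intro x y hx hy
      have h1 : x * y ∈ V * V := Submodule.mul_mem_mul hx hy
      rw [hV, Submodule.span_mul_span] at h1
      refine Submodule.span_le.mpr ?_ h1
      rintro z ⟨u, hu, v, hv, rfl⟩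
      obtain ⟨p, hp, rfl⟩ := hu
      obtain ⟨q, hq, rfl⟩ := hv
      exact hmulS' p (by simpa using hp) q (by simpa using hq)
    have hAV : A ∈ V := by
      rw [hA, diagonal_eq_sum_std]
      exact Submodule.sum_mem _
        (fun i _ => Submodule.smul_mem _ _ (hmemV (i, i) (hdiagS' i)))
    have hBsum : B = ∑ p ∈ S, E p := by
      ext a b
      rw [Matrix.sum_apply]
      have hterm : ∀ p ∈ S, (E p) a b = if (a, b) = p then (1:ℝ) else 0 := by
        rintro ⟨c, d⟩ -
        simp only [hE, Matrix.single, Matrix.of_apply, Prod.mk.injEq]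
        by_cases h1 : c = a <;> by_cases h2 : d = b <;> simp [h1, h2]
        · exact fun h : b = d => h2 h.symm
        · exact fun h : a = c => h1 h.symm
        · exact fun h : a = c => absurd h.symm h1

      rw [Finset.sum_congr rfl hterm, Finset.sum_ite_eq S (a, b) (fun _ => (1:ℝ))]
      simp [hB]
    have hBV : B ∈ V := by
      rw [hBsum]
      exact Submodule.sum_mem _ (fun p hp => hmemV p (hSS' hp))
    have hle1 : Algebra.adjoin ℝ {A, B} ≤ V.toSubalgebra honeV hVmul := by
      apply Algebra.adjoin_le
      rintro x hx
      rcases Set.mem_insert_iff.mp hx with rfl | hx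
      · exact hAV
      · rw [Set.mem_singleton_iff] at hx
        subst hx
        exact hBV
    have hAmem : A ∈ Algebra.adjoin ℝ {A, B} := Algebra.subset_adjoin (by simp)
    have hBmem : B ∈ Algebra.adjoin ℝ {A, B} := Algebra.subset_adjoin (by simp)
    have hdiagmem : ∀ i : Fin n, E (i, i) ∈ Algebra.adjoin ℝ {A, B} := by
      intro i
      have hq : Polynomial.aeval A (Lagrange.basis Finset.univ D i) = E (i, i) := by
        rw [hA, aeval_diagonal]
        have hev : (fun j => (Lagrange.basis Finset.univ D i).eval (D j)) =
            fun j => if i = j then (1:ℝ) else 0 := by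
          funext j
          by_cases h : i = j
          · subst h
            simp [Lagrange.eval_basis_self hDinj.injOn (Finset.mem_univ i)]
          · simp [h, Lagrange.eval_basis_of_ne h (Finset.mem_univ j)]
        rw [hev]
        ext a b
        rcases eq_or_ne a b with hab | hab
        · subst hab
          simp [hE, Matrix.single, Matrix.diagonal_apply_eq]
        · rw [Matrix.diagonal_apply_ne _ hab]
          have hcond : ¬(i = a ∧ i = b) := by
            rintro ⟨rfl, h2⟩
            exact hab h2
          simp [hE, Matrix.single, hcond]
      rw [← hq, Polynomial.aeval_eq_sum_range]
      exact Subalgebra.sum_mem _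
        (fun c _ => Subalgebra.smul_mem _ (Subalgebra.pow_mem _ hAmem c) _)
    have hEmem : ∀ p ∈ S', E p ∈ Algebra.adjoin ℝ {A, B} := by
      rintro ⟨i, j⟩ hp
      rcases hS'mem _ hp with hpS | hpd
      · have hij1 : B i j = 1 := by simp [hB, hpS]
        have hprod : E (i, i) * B * E (j, j) = E (i, j) := by
          simp only [hE]
          rw [std_mul_mul_std, hij1]
        rw [← hprod]
        exact mul_mem (mul_mem (hdiagmem i) hBmem) (hdiagmem j)
      · have : i = j := hpd
        subst this
        exact hdiagmem i
    have hle2 : V.toSubalgebra honeV hVmul ≤ Algebra.adjoin ℝ {A, B} := by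
      intro x hx
      have hVle : V ≤ Subalgebra.toSubmodule (Algebra.adjoin ℝ {A, B}) := by
        rw [hV]
        apply Submodule.span_le.mpr
        rintro z ⟨p, hp, rfl⟩
        exact hEmem p (by simpa using hp)
      exact hVle hx
    have heq : Algebra.adjoin ℝ {A, B} = V.toSubalgebra honeV hVmul :=
      le_antisymm hle1 hle2
    have hli : LinearIndependent ℝ (fun p : {x // x ∈ S'} => E (p : Fin n × Fin n)) := by
      have hcomp : (fun p : {x // x ∈ S'} => E (p : Fin n × Fin n)) =
          (Matrix.stdBasis ℝ (Fin n) (Fin n)) ∘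
            (fun p : {x // x ∈ S'} => (p : Fin n × Fin n)) := by
        funext p
        exact (Matrix.stdBasis_eq_single (R := ℝ)
          (i := (p : Fin n × Fin n).1) (j := (p : Fin n × Fin n).2)).symm
      rw [hcomp]
      exact (Matrix.stdBasis ℝ (Fin n) (Fin n)).linearIndependent.comp _ Subtype.coe_injective
    have hrange : Set.range (fun p : {x // x ∈ S'} => E (p : Fin n × Fin n)) = E '' ↑S' :=
      (Set.image_eq_range E ↑S').symm
    have hfrV : Module.finrank ℝ ↥V = S'.card := by
      rw [hV, ← hrange, finrank_span_eq_card hli, Fintype.card_coe]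
    have hfr2 : Module.finrank ℝ ↥(Algebra.adjoin ℝ {A, B}) = Module.finrank ℝ ↥V := by
      rw [heq]
      exact (LinearEquiv.finrank_eq
        ((Submodule.toSubalgebra V honeV hVmul).toSubmoduleEquiv.symm)).symm ▸ rfl
    rw [hfr2, hfrV, hS'card]
    omega
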